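/- arXiv:1710.07785 — 2 statements merged into one kernel-verified Lean document; each statement's English description precedes it below -/
import Mathlib

section
/- Let α = α₁ + uα₂ + vα₃ + uvα₄ be a unit in R with α₁,...,α₄ ∈ F_{p^t}, and let C = e₁C₁ ⊕ e₂C₂ ⊕ e₃C₃ ⊕ e₄C₄ be a linear code of length n over R. Then C is skew α-constacyclic over R if and only if C₁ is skew α₁-constacyclic, C₂ is skew (α₁+α₂)-constacyclic, C₃ is skew (α₁+α₃)-constacyclic, and C₄ is skew (α₁+α₂+α₃+α₄)-constacyclic over F_q. -/
/-- The standard form `a + u*b + v*c + u*v*d` of an element of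
`R = F_q + uF_q + vF_q + uvF_q`. -/
def stdForm (F R : Type*) [Field F] [CommRing R] [Algebra F R] (u v : R)
    (x : F × F × F × F) : R :=
  algebraMap F R x.1 + u * algebraMap F R x.2.1 + v * algebraMap F R x.2.2.1
    + u * v * algebraMap F R x.2.2.2

/-- The code `e₁C₁ ⊕ e₂C₂ ⊕ e₃C₃ ⊕ e₄C₄` over `R`. -/
def combSet (F R : Type*) [Field F] [CommRing R] [Algebra F R] (u v : R) {n : ℕ}
    (C₁ C₂ C₃ C₄ : Set (Fin n → F)) : Set (Fin n → R) :=
  {x | ∃ a ∈ C₁, ∃ b ∈ C₂, ∃ c ∈ C₃, ∃ d ∈ C₄, x = fun i =>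
    (1 - u - v + u * v) * algebraMap F R (a i) + (u - u * v) * algebraMap F R (b i)
      + (v - u * v) * algebraMap F R (c i) + u * v * algebraMap F R (d i)}

/-- The skew `β`-constacyclic shift `τ_β` with respect to `θ`. -/
def skewConstaShift {R : Type*} [Mul R] [One R] [DecidableEq R] (θ : R → R) (β : R)
    {n : ℕ} [NeZero n] (x : Fin n → R) : Fin n → R :=
  fun i => (if i = 0 then β else 1) * θ (x (i - 1))

/-- Auxiliary: the combination map. -/
def Phi17 (F R : Type*) [Field F] [CommRing R] [Algebra F R] (u v : R) {n : ℕ}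
    (a b c d : Fin n → F) : Fin n → R := fun i =>
  (1 - u - v + u * v) * algebraMap F R (a i) + (u - u * v) * algebraMap F R (b i)
    + (v - u * v) * algebraMap F R (c i) + u * v * algebraMap F R (d i)

lemma mulAux17 {R : Type*} [CommRing R] (u v : R) (hu : u * u = u) (hv : v * v = v)
    (A₁ A₂ A₃ A₄ B₁ B₂ B₃ B₄ : R) :
    (A₁ + u * A₂ + v * A₃ + u * v * A₄) *
      ((1 - u - v + u * v) * B₁ + (u - u * v) * B₂ + (v - u * v) * B₃ + u * v * B₄) =
    (1 - u - v + u * v) * (A₁ * B₁) + (u - u * v) * ((A₁ + A₂) * B₂)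
      + (v - u * v) * ((A₁ + A₃) * B₃) + u * v * ((A₁ + A₂ + A₃ + A₄) * B₄) := by
  linear_combination (A₂*B₁*(v-1) + A₂*B₂*(1-v) - A₂*B₃*v + A₂*B₄*v + A₄*B₁*(v^2-v)
      + A₄*B₂*(v-v^2) - A₄*B₃*v^2 + A₄*B₄*v^2) * hu
    + (A₃*B₁*(u-1) - A₃*B₂*u + A₃*B₃*(1-u) + A₃*B₄*u - A₄*B₂*u + A₄*B₄*u) * hv

lemma key17 (F R : Type*) [Field F] [CommRing R] [Algebra F R] (u v : R) (a b c d : F) :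
    (1 - u - v + u * v) * algebraMap F R a + (u - u * v) * algebraMap F R b
      + (v - u * v) * algebraMap F R c + u * v * algebraMap F R d
      = stdForm F R u v (a, b - a, c - a, a - b - c + d) := by
  simp only [stdForm, map_sub, map_add]
  ring

lemma Phi17_inj (F R : Type*) [Field F] [CommRing R] [Algebra F R] (u v : R)
    (hbij : Function.Injective (stdForm F R u v)) {n : ℕ}
    (a b c d a' b' c' d' : Fin n → F)
    (h : Phi17 F R u v a b c d = Phi17 F R u v a' b' c' d') :
    a = a' ∧ b = b' ∧ c = c' ∧ d = d' := by
  have h2 : ∀ i, (a i, b i - a i, c i - a i, a i - b i - c i + d i)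
      = (a' i, b' i - a' i, c' i - a' i, a' i - b' i - c' i + d' i) := by
    intro i
    apply hbij
    rw [← key17, ← key17]
    exact congrFun h i
  have h3 : ∀ i, a i = a' i ∧ (b i - a i = b' i - a' i ∧ (c i - a i = c' i - a' i ∧
      a i - b i - c i + d i = a' i - b' i - c' i + d' i)) := by
    intro i
    have := h2 i
    simpa only [Prod.mk.injEq] using this
  refine ⟨funext fun i => ?_, funext fun i => ?_, funext fun i => ?_, funext fun i => ?_⟩
  · exact (h3 i).1
  · obtain ⟨e1, e2, _, _⟩ := h3 i
    linear_combination e2 + e1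
  · obtain ⟨e1, _, e3, _⟩ := h3 i
    linear_combination e3 + e1
  · obtain ⟨e1, e2, e3, e4⟩ := h3 i
    linear_combination e4 + e1 + e2 + e3

lemma theta_Phi17 (p t : ℕ) [Fact p.Prime] (F R : Type*) [Field F] [CharP F p]
    [CommRing R] [Algebra F R] (u v : R) (θ : R → R)
    (hθ : ∀ a b c d : F, θ (stdForm F R u v (a, b, c, d)) =
      stdForm F R u v (a ^ p ^ t, b ^ p ^ t, c ^ p ^ t, d ^ p ^ t))
    {n : ℕ} (a b c d : Fin n → F) (j : Fin n) :
    θ (Phi17 F R u v a b c d j)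
      = (1 - u - v + u * v) * algebraMap F R (a j ^ p ^ t)
        + (u - u * v) * algebraMap F R (b j ^ p ^ t)
        + (v - u * v) * algebraMap F R (c j ^ p ^ t)
        + u * v * algebraMap F R (d j ^ p ^ t) := by
  show θ ((1 - u - v + u * v) * algebraMap F R (a j) + (u - u * v) * algebraMap F R (b j)
      + (v - u * v) * algebraMap F R (c j) + u * v * algebraMap F R (d j)) = _
  rw [key17, hθ]
  simp only [sub_pow_char_pow, add_pow_char_pow]
  exact (key17 F R u v (a j ^ p ^ t) (b j ^ p ^ t) (c j ^ p ^ t) (d j ^ p ^ t)).symm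

lemma comm17 (p t : ℕ) [Fact p.Prime] (F R : Type*) [Field F] [CharP F p] [DecidableEq F]
    [CommRing R] [DecidableEq R] [Algebra F R] (u v : R)
    (hu : u * u = u) (hv : v * v = v) (θ : R → R)
    (hθ : ∀ a b c d : F, θ (stdForm F R u v (a, b, c, d)) =
      stdForm F R u v (a ^ p ^ t, b ^ p ^ t, c ^ p ^ t, d ^ p ^ t))
    (α₁ α₂ α₃ α₄ : F) {n : ℕ} [NeZero n] (a b c d : Fin n → F) :
    skewConstaShift θ (stdForm F R u v (α₁, α₂, α₃, α₄)) (Phi17 F R u v a b c d)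
      = Phi17 F R u v (skewConstaShift (· ^ p ^ t) α₁ a)
          (skewConstaShift (· ^ p ^ t) (α₁ + α₂) b)
          (skewConstaShift (· ^ p ^ t) (α₁ + α₃) c)
          (skewConstaShift (· ^ p ^ t) (α₁ + α₂ + α₃ + α₄) d) := by
  funext i
  show (if i = 0 then stdForm F R u v (α₁, α₂, α₃, α₄) else 1) * θ (Phi17 F R u v a b c d (i - 1))
    = (1 - u - v + u * v) * algebraMap F R ((if i = 0 then α₁ else 1) * a (i - 1) ^ p ^ t)
      + (u - u * v) * algebraMap F R ((if i = 0 then α₁ + α₂ else 1) * b (i - 1) ^ p ^ t)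
      + (v - u * v) * algebraMap F R ((if i = 0 then α₁ + α₃ else 1) * c (i - 1) ^ p ^ t)
      + u * v * algebraMap F R ((if i = 0 then α₁ + α₂ + α₃ + α₄ else 1) * d (i - 1) ^ p ^ t)
  rw [theta_Phi17 p t F R u v θ hθ a b c d (i - 1)]
  by_cases hi : i = 0
  · simp only [if_pos hi, map_mul, map_add]
    show stdForm F R u v (α₁, α₂, α₃, α₄) * _ = _
    simp only [stdForm]
    exact mulAux17 u v hu hv (algebraMap F R α₁) (algebraMap F R α₂) (algebraMap F R α₃)
      (algebraMap F R α₄) (algebraMap F R (a (i-1) ^ p ^ t)) (algebraMap F R (b (i-1) ^ p ^ t))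
      (algebraMap F R (c (i-1) ^ p ^ t)) (algebraMap F R (d (i-1) ^ p ^ t))
  · simp only [if_neg hi, one_mul]

theorem stmt17 (p m t : ℕ) (hp : p.Prime) (hodd : p ≠ 2) (ht : 0 < t) (htm : t ∣ m)
    (F : Type*) [Field F] [Fintype F] [DecidableEq F] (hF : Fintype.card F = p ^ m)
    (R : Type*) [CommRing R] [DecidableEq R] [Algebra F R] (u v : R)
    (hu : u * u = u) (hv : v * v = v)
    (hbij : Function.Bijective (stdForm F R u v))
    (θ : R → R)
    (hθ : ∀ a b c d : F, θ (stdForm F R u v (a, b, c, d)) =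
      stdForm F R u v (a ^ p ^ t, b ^ p ^ t, c ^ p ^ t, d ^ p ^ t))
    -- α = α₁ + uα₂ + vα₃ + uvα₄ with the αᵢ in F_{p^t} (fixed by the Frobenius x ↦ x^(p^t))
    (α₁ α₂ α₃ α₄ : F)
    (hfix₁ : α₁ ^ p ^ t = α₁) (hfix₂ : α₂ ^ p ^ t = α₂)
    (hfix₃ : α₃ ^ p ^ t = α₃) (hfix₄ : α₄ ^ p ^ t = α₄)
    (hαunit : IsUnit (stdForm F R u v (α₁, α₂, α₃, α₄)))
    (n : ℕ) [NeZero n]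
    (C : Submodule R (Fin n → R)) (C₁ C₂ C₃ C₄ : Submodule F (Fin n → F))
    (hC : (C : Set (Fin n → R)) = combSet F R u v (C₁ : Set (Fin n → F)) C₂ C₃ C₄) :
    skewConstaShift θ (stdForm F R u v (α₁, α₂, α₃, α₄)) '' (C : Set (Fin n → R)) = C ↔
      (skewConstaShift (· ^ p ^ t) α₁ '' (C₁ : Set (Fin n → F)) = C₁ ∧
       skewConstaShift (· ^ p ^ t) (α₁ + α₂) '' (C₂ : Set (Fin n → F)) = C₂ ∧
       skewConstaShift (· ^ p ^ t) (α₁ + α₃) '' (C₃ : Set (Fin n → F)) = C₃ ∧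
       skewConstaShift (· ^ p ^ t) (α₁ + α₂ + α₃ + α₄) '' (C₄ : Set (Fin n → F)) = C₄) := by
  haveI : Fact p.Prime := ⟨hp⟩
  have hm : m ≠ 0 := by
    rintro rfl
    have h2 : 1 < Fintype.card F := Fintype.one_lt_card
    rw [hF, pow_zero] at h2
    exact absurd h2 (lt_irrefl 1)
  haveI hcharF : CharP F p := by
    have h0 : (p : F) ^ m = 0 := by
      rw [← Nat.cast_pow, ← hF, Nat.cast_card_eq_zero]
    have hp0 : (p : F) = 0 := (pow_eq_zero_iff hm).mp h0
    have hdvd : ringChar F ∣ p := (ringChar.spec F p).mp hp0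
    have hrc : ringChar F = p :=
      (hp.eq_one_or_self_of_dvd _ hdvd).resolve_left (CharP.char_ne_one F (ringChar F))
    exact hrc ▸ ringChar.charP F
  have hQ0 : p ^ t ≠ 0 := pow_ne_zero _ hp.pos.ne'
  have hmem : ∀ x : Fin n → R, x ∈ (C : Set (Fin n → R)) ↔
      ∃ a ∈ (C₁ : Set (Fin n → F)), ∃ b ∈ (C₂ : Set (Fin n → F)),
        ∃ c ∈ (C₃ : Set (Fin n → F)), ∃ d ∈ (C₄ : Set (Fin n → F)),
          x = Phi17 F R u v a b c d := by
    intro x; rw [hC]; exact Iff.rfl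
  have hS0 : ∀ β : F, skewConstaShift (· ^ p ^ t) β (0 : Fin n → F) = 0 := by
    intro β; funext i
    show (if i = 0 then β else 1) * (0 : F) ^ p ^ t = 0
    rw [zero_pow hQ0, mul_zero]
  have hcm := comm17 p t F R u v hu hv θ hθ α₁ α₂ α₃ α₄ (n := n)
  have hinj := Phi17_inj F R u v hbij.injective (n := n)
  constructor
  · intro hτ
    refine ⟨?_, ?_, ?_, ?_⟩
    · apply Set.Subset.antisymm
      · rintro _ ⟨a, ha, rfl⟩
        have hx : Phi17 F R u v a 0 0 0 ∈ (C : Set (Fin n → R)) :=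
          (hmem _).mpr ⟨a, ha, 0, C₂.zero_mem, 0, C₃.zero_mem, 0, C₄.zero_mem, rfl⟩
        have hx2 := hτ ▸ Set.mem_image_of_mem
          (skewConstaShift θ (stdForm F R u v (α₁, α₂, α₃, α₄))) hx
        rw [hcm, hS0, hS0, hS0] at hx2
        obtain ⟨a', ha', b', hb', c', hc', d', hd', heq⟩ := (hmem _).mp hx2
        obtain ⟨h1, -, -, -⟩ := hinj _ _ _ _ _ _ _ _ heq
        rw [h1]; exact ha'
      · intro a ha
        have hx : Phi17 F R u v a 0 0 0 ∈ (C : Set (Fin n → R)) :=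
          (hmem _).mpr ⟨a, ha, 0, C₂.zero_mem, 0, C₃.zero_mem, 0, C₄.zero_mem, rfl⟩
        rw [← hτ] at hx
        obtain ⟨y, hy, hyx⟩ := hx
        obtain ⟨a₀, ha₀, b₀, hb₀, c₀, hc₀, d₀, hd₀, rfl⟩ := (hmem _).mp hy
        rw [hcm] at hyx
        obtain ⟨h1, -, -, -⟩ := hinj _ _ _ _ _ _ _ _ hyx
        exact ⟨a₀, ha₀, h1⟩
    · apply Set.Subset.antisymm
      · rintro _ ⟨b, hb, rfl⟩
        have hx : Phi17 F R u v 0 b 0 0 ∈ (C : Set (Fin n → R)) :=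
          (hmem _).mpr ⟨0, C₁.zero_mem, b, hb, 0, C₃.zero_mem, 0, C₄.zero_mem, rfl⟩
        have hx2 := hτ ▸ Set.mem_image_of_mem
          (skewConstaShift θ (stdForm F R u v (α₁, α₂, α₃, α₄))) hx
        rw [hcm, hS0, hS0, hS0] at hx2
        obtain ⟨a', ha', b', hb', c', hc', d', hd', heq⟩ := (hmem _).mp hx2
        obtain ⟨-, h2, -, -⟩ := hinj _ _ _ _ _ _ _ _ heq
        rw [h2]; exact hb'
      · intro b hb
        have hx : Phi17 F R u v 0 b 0 0 ∈ (C : Set (Fin n → R)) :=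
          (hmem _).mpr ⟨0, C₁.zero_mem, b, hb, 0, C₃.zero_mem, 0, C₄.zero_mem, rfl⟩
        rw [← hτ] at hx
        obtain ⟨y, hy, hyx⟩ := hx
        obtain ⟨a₀, ha₀, b₀, hb₀, c₀, hc₀, d₀, hd₀, rfl⟩ := (hmem _).mp hy
        rw [hcm] at hyx
        obtain ⟨-, h2, -, -⟩ := hinj _ _ _ _ _ _ _ _ hyx
        exact ⟨b₀, hb₀, h2⟩
    · apply Set.Subset.antisymm
      · rintro _ ⟨c, hc, rfl⟩
        have hx : Phi17 F R u v 0 0 c 0 ∈ (C : Set (Fin n → R)) :=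
          (hmem _).mpr ⟨0, C₁.zero_mem, 0, C₂.zero_mem, c, hc, 0, C₄.zero_mem, rfl⟩
        have hx2 := hτ ▸ Set.mem_image_of_mem
          (skewConstaShift θ (stdForm F R u v (α₁, α₂, α₃, α₄))) hx
        rw [hcm, hS0, hS0, hS0] at hx2
        obtain ⟨a', ha', b', hb', c', hc', d', hd', heq⟩ := (hmem _).mp hx2
        obtain ⟨-, -, h3, -⟩ := hinj _ _ _ _ _ _ _ _ heq
        rw [h3]; exact hc'
      · intro c hc
        have hx : Phi17 F R u v 0 0 c 0 ∈ (C : Set (Fin n → R)) :=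
          (hmem _).mpr ⟨0, C₁.zero_mem, 0, C₂.zero_mem, c, hc, 0, C₄.zero_mem, rfl⟩
        rw [← hτ] at hx
        obtain ⟨y, hy, hyx⟩ := hx
        obtain ⟨a₀, ha₀, b₀, hb₀, c₀, hc₀, d₀, hd₀, rfl⟩ := (hmem _).mp hy
        rw [hcm] at hyx
        obtain ⟨-, -, h3, -⟩ := hinj _ _ _ _ _ _ _ _ hyx
        exact ⟨c₀, hc₀, h3⟩
    · apply Set.Subset.antisymm
      · rintro _ ⟨d, hd, rfl⟩
        have hx : Phi17 F R u v 0 0 0 d ∈ (C : Set (Fin n → R)) :=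
          (hmem _).mpr ⟨0, C₁.zero_mem, 0, C₂.zero_mem, 0, C₃.zero_mem, d, hd, rfl⟩
        have hx2 := hτ ▸ Set.mem_image_of_mem
          (skewConstaShift θ (stdForm F R u v (α₁, α₂, α₃, α₄))) hx
        rw [hcm, hS0, hS0, hS0] at hx2
        obtain ⟨a', ha', b', hb', c', hc', d', hd', heq⟩ := (hmem _).mp hx2
        obtain ⟨-, -, -, h4⟩ := hinj _ _ _ _ _ _ _ _ heq
        rw [h4]; exact hd'
      · intro d hd
        have hx : Phi17 F R u v 0 0 0 d ∈ (C : Set (Fin n → R)) :=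
          (hmem _).mpr ⟨0, C₁.zero_mem, 0, C₂.zero_mem, 0, C₃.zero_mem, d, hd, rfl⟩
        rw [← hτ] at hx
        obtain ⟨y, hy, hyx⟩ := hx
        obtain ⟨a₀, ha₀, b₀, hb₀, c₀, hc₀, d₀, hd₀, rfl⟩ := (hmem _).mp hy
        rw [hcm] at hyx
        obtain ⟨-, -, -, h4⟩ := hinj _ _ _ _ _ _ _ _ hyx
        exact ⟨d₀, hd₀, h4⟩
  · rintro ⟨h1, h2, h3, h4⟩
    apply Set.Subset.antisymm
    · rintro _ ⟨x, hx, rfl⟩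
      obtain ⟨a, ha, b, hb, c, hc, d, hd, rfl⟩ := (hmem _).mp hx
      refine (hmem _).mpr ⟨_, ?_, _, ?_, _, ?_, _, ?_, hcm a b c d⟩
      · rw [← h1]; exact Set.mem_image_of_mem _ ha
      · rw [← h2]; exact Set.mem_image_of_mem _ hb
      · rw [← h3]; exact Set.mem_image_of_mem _ hc
      · rw [← h4]; exact Set.mem_image_of_mem _ hd
    · intro x hx
      obtain ⟨a, ha, b, hb, c, hc, d, hd, rfl⟩ := (hmem _).mp hx
      rw [← h1] at ha; rw [← h2] at hb; rw [← h3] at hc; rw [← h4] at hd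
      obtain ⟨a₀, ha₀, rfl⟩ := ha
      obtain ⟨b₀, hb₀, rfl⟩ := hb
      obtain ⟨c₀, hc₀, rfl⟩ := hc
      obtain ⟨d₀, hd₀, rfl⟩ := hd
      exact ⟨Phi17 F R u v a₀ b₀ c₀ d₀,
        (hmem _).mpr ⟨a₀, ha₀, b₀, hb₀, c₀, hc₀, d₀, hd₀, rfl⟩, hcm a₀ b₀ c₀ d₀⟩
end

section
/- Let α = α₁+uα₂+vα₃+uvα₄ be a unit in R with αᵢ ∈ F_{p^t}, and suppose f₁,...,f₄ ∈ F_q[x;θ_t] are monic right divisors of xⁿ-α₁, xⁿ-(α₁+α₂), xⁿ-(α₁+α₃), xⁿ-(α₁+α₂+α₃+α₄), respectively. Then f(x) = e₁f₁(x)+e₂f₂(x)+e₃f₃(x)+e₄f₄(x) is a right divisor of xⁿ-α in R[x;θ_t], and the skew α-constacyclic code C = e₁⟨f₁⟩ ⊕ e₂⟨f₂⟩ ⊕ e₃⟨f₃⟩ ⊕ e₄⟨f₄⟩ equals the left R[x;θ_t]-submodule generated by f(x). -/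
open Polynomial

/-- Multiplication in the skew polynomial ring `S[x;θ]`:
`(a xⁱ) * (b xʲ) = a θⁱ(b) x^(i+j)`. -/
noncomputable def skewMul {S : Type*} [CommRing S] (θ : S → S) (f g : Polynomial S) :
    Polynomial S :=
  ∑ i ∈ f.support, ∑ j ∈ g.support,
    Polynomial.C (f.coeff i * θ^[i] (g.coeff j)) * Polynomial.X ^ (i + j)

/-- Reduction of a skew polynomial modulo `xⁿ - β` (for `β` fixed by the automorphism),
giving the coefficient vector of the canonical representative of degree `< n`. -/
def redModC {S : Type*} [CommRing S] (n : ℕ) [NeZero n] (β : S) (f : Polynomial S) :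
    Fin n → S :=
  fun i => ∑ j ∈ f.support.filter (fun j => j % n = (i : ℕ)), β ^ (j / n) * f.coeff j

/-- The skew `β`-constacyclic code (left submodule of `S[x;θ]/⟨xⁿ-β⟩`) generated by `f`. -/
noncomputable def skewGenC {S : Type*} [CommRing S] (θ : S → S) (n : ℕ) [NeZero n] (β : S)
    (f : Polynomial S) : Set (Fin n → S) :=
  {c | ∃ h : Polynomial S, c = redModC n β (skewMul θ h f)}

section SkewLemmas
variable {S : Type*} [CommRing S] {θ : S → S}

lemma skewMul_eq_sum (h0 : θ 0 = 0) {f g : Polynomial S} {A B : Finset ℕ}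
    (hA : f.support ⊆ A) (hB : g.support ⊆ B) :
    skewMul θ f g = ∑ i ∈ A, ∑ j ∈ B, C (f.coeff i * θ^[i] (g.coeff j)) * X ^ (i + j) := by
  unfold skewMul
  have step1 : ∀ i, (∑ j ∈ g.support, (C (f.coeff i * θ^[i] (g.coeff j)) * X ^ (i + j)))
      = ∑ j ∈ B, C (f.coeff i * θ^[i] (g.coeff j)) * X ^ (i + j) := fun i =>
    Finset.sum_subset hB fun j _ hj => by
      simp [Polynomial.notMem_support_iff.mp hj, Function.iterate_fixed h0]
  rw [Finset.sum_congr rfl fun i _ => step1 i]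
  exact Finset.sum_subset hA fun i _ hi => by
    simp [Polynomial.notMem_support_iff.mp hi]

lemma skewMul_add_left (h0 : θ 0 = 0) (f₁ f₂ g : Polynomial S) :
    skewMul θ (f₁ + f₂) g = skewMul θ f₁ g + skewMul θ f₂ g := by
  rw [skewMul_eq_sum h0 (A := f₁.support ∪ f₂.support) (B := g.support)
      (Polynomial.support_add) (subset_refl _),
    skewMul_eq_sum h0 (A := f₁.support ∪ f₂.support) (B := g.support)
      (Finset.subset_union_left) (subset_refl _),
    skewMul_eq_sum h0 (A := f₁.support ∪ f₂.support) (B := g.support)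
      (Finset.subset_union_right) (subset_refl _)]
  simp only [coeff_add, add_mul, map_add, ← Finset.sum_add_distrib]

lemma skewMul_add_right (h0 : θ 0 = 0) (hadd : ∀ a b, θ (a + b) = θ a + θ b)
    (f g₁ g₂ : Polynomial S) :
    skewMul θ f (g₁ + g₂) = skewMul θ f g₁ + skewMul θ f g₂ := by
  have hit : ∀ i a b, θ^[i] (a + b) = θ^[i] a + θ^[i] b := by
    intro i
    induction i with
    | zero => simp
    | succ k ih => intro a b; simp [Function.iterate_succ_apply, hadd, ih]
  rw [skewMul_eq_sum h0 (A := f.support) (B := g₁.support ∪ g₂.support)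
      (subset_refl _) (Polynomial.support_add),
    skewMul_eq_sum h0 (A := f.support) (B := g₁.support ∪ g₂.support)
      (subset_refl _) (Finset.subset_union_left),
    skewMul_eq_sum h0 (A := f.support) (B := g₁.support ∪ g₂.support)
      (subset_refl _) (Finset.subset_union_right)]
  simp only [coeff_add, hit, mul_add, add_mul, map_add, ← Finset.sum_add_distrib]

lemma support_C_mul_subset (e : S) (f : Polynomial S) : (C e * f).support ⊆ f.support := by
  intro i hi
  rw [mem_support_iff] at *
  intro h
  exact hi (by simp [coeff_C_mul, h])

lemma skewMul_C_mul_left (h0 : θ 0 = 0) (e : S) (f g : Polynomial S) :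
    skewMul θ (C e * f) g = C e * skewMul θ f g := by
  rw [skewMul_eq_sum h0 (A := f.support) (B := g.support) (support_C_mul_subset e f)
    (subset_refl _)]
  unfold skewMul
  rw [Finset.mul_sum]
  refine Finset.sum_congr rfl fun i _ => ?_
  rw [Finset.mul_sum]
  refine Finset.sum_congr rfl fun j _ => ?_
  rw [coeff_C_mul, ← mul_assoc, ← C_mul, mul_assoc]

lemma skewMul_C_mul_right (h0 : θ 0 = 0) (e : S) (hcomm : ∀ x, θ (e * x) = e * θ x)
    (f g : Polynomial S) :
    skewMul θ f (C e * g) = C e * skewMul θ f g := by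
  have hit : ∀ i x, θ^[i] (e * x) = e * θ^[i] x := by
    intro i
    induction i with
    | zero => simp
    | succ k ih => intro x; simp [Function.iterate_succ_apply, hcomm, ih]
  rw [skewMul_eq_sum h0 (A := f.support) (B := g.support) (subset_refl _)
    (support_C_mul_subset e g)]
  unfold skewMul
  rw [Finset.mul_sum]
  refine Finset.sum_congr rfl fun i _ => ?_
  rw [Finset.mul_sum]
  refine Finset.sum_congr rfl fun j _ => ?_
  rw [coeff_C_mul, hit, ← mul_assoc, mul_comm (f.coeff i) e, ← mul_assoc, ← C_mul, mul_assoc]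

lemma skewMul_map {F : Type*} [CommRing F] (φ : F →+* S) (σ : F → F)
    (hcomm : ∀ a, θ (φ a) = φ (σ a)) (hσ0 : σ 0 = 0) (f g : Polynomial F) :
    skewMul θ (f.map φ) (g.map φ) = (skewMul σ f g).map φ := by
  have h0 : θ 0 = 0 := by have := hcomm 0; simpa [hσ0] using this
  have hit : ∀ i a, θ^[i] (φ a) = φ (σ^[i] a) := by
    intro i
    induction i with
    | zero => simp
    | succ k ih => intro a; rw [Function.iterate_succ_apply, hcomm, ih,
        Function.iterate_succ_apply]
  rw [skewMul_eq_sum h0 (A := f.support) (B := g.support)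
    (Polynomial.support_map_subset φ f) (Polynomial.support_map_subset φ g)]
  unfold skewMul
  rw [Polynomial.map_sum]
  refine Finset.sum_congr rfl fun i _ => ?_
  rw [Polynomial.map_sum]
  refine Finset.sum_congr rfl fun j _ => ?_
  simp only [Polynomial.map_mul, Polynomial.map_pow, Polynomial.map_X, Polynomial.map_C,
    coeff_map, hit, map_mul, C_mul]

end SkewLemmas

section RedLemmas
variable {S : Type*} [CommRing S] {n : ℕ} [NeZero n]

lemma redModC_eq_sum {β : S} {f : Polynomial S} {A : Finset ℕ} (hA : f.support ⊆ A)
    (i : Fin n) :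
    redModC n β f i = ∑ j ∈ A.filter (fun j => j % n = (i : ℕ)), β ^ (j / n) * f.coeff j := by
  unfold redModC
  refine Finset.sum_subset (Finset.filter_subset_filter _ hA) ?_
  intro j hjA hj
  have hz : f.coeff j = 0 := by
    by_contra h
    exact hj (Finset.mem_filter.mpr ⟨mem_support_iff.mpr h, (Finset.mem_filter.mp hjA).2⟩)
  simp [hz]

lemma redModC_add (β : S) (f g : Polynomial S) (i : Fin n) :
    redModC n β (f + g) i = redModC n β f i + redModC n β g i := by
  rw [redModC_eq_sum (A := f.support ∪ g.support) support_add i,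
      redModC_eq_sum (A := f.support ∪ g.support) Finset.subset_union_left i,
      redModC_eq_sum (A := f.support ∪ g.support) Finset.subset_union_right i]
  simp only [coeff_add, mul_add, Finset.sum_add_distrib]

lemma redModC_C_mul_map {F : Type*} [CommRing F] (φ : F →+* S) (e αR : S) (β : F)
    (he : e * αR = e * φ β) (g : Polynomial F) (i : Fin n) :
    redModC n αR (C e * g.map φ) i = e * φ (redModC n β g i) := by
  have hpow : ∀ s, e * αR ^ s = e * (φ β) ^ s := by
    intro s
    induction s with
    | zero => simp
    | succ k ih =>
        calc e * αR ^ (k + 1) = (e * αR ^ k) * αR := by ring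
          _ = (e * (φ β) ^ k) * αR := by rw [ih]
          _ = (φ β) ^ k * (e * αR) := by ring
          _ = (φ β) ^ k * (e * φ β) := by rw [he]
          _ = e * (φ β) ^ (k + 1) := by ring
  rw [redModC_eq_sum (A := g.support)
    ((support_C_mul_subset e _).trans (Polynomial.support_map_subset φ g)) i]
  unfold redModC
  rw [map_sum, Finset.mul_sum]
  refine Finset.sum_congr rfl fun j _ => ?_
  rw [coeff_C_mul, coeff_map, map_mul, map_pow]
  calc αR ^ (j / n) * (e * φ (g.coeff j)) = (e * αR ^ (j / n)) * φ (g.coeff j) := by ring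
    _ = (e * (φ β) ^ (j / n)) * φ (g.coeff j) := by rw [hpow]
    _ = e * ((φ β) ^ (j / n) * φ (g.coeff j)) := by ring

end RedLemmas

theorem stmt18 (p m t : ℕ) (hp : p.Prime) (hodd : p ≠ 2) (ht : 0 < t) (htm : t ∣ m)
    (F : Type*) [Field F] [Fintype F] (hF : Fintype.card F = p ^ m)
    (R : Type*) [CommRing R] [Algebra F R] (u v : R)
    (hu : u * u = u) (hv : v * v = v)
    (hbij : Function.Bijective (stdForm F R u v))
    (θ : R → R)
    (hθ : ∀ a b c d : F, θ (stdForm F R u v (a, b, c, d)) =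
      stdForm F R u v (a ^ p ^ t, b ^ p ^ t, c ^ p ^ t, d ^ p ^ t))
    (α₁ α₂ α₃ α₄ : F)
    (hfix₁ : α₁ ^ p ^ t = α₁) (hfix₂ : α₂ ^ p ^ t = α₂)
    (hfix₃ : α₃ ^ p ^ t = α₃) (hfix₄ : α₄ ^ p ^ t = α₄)
    (hαunit : IsUnit (stdForm F R u v (α₁, α₂, α₃, α₄)))
    (n : ℕ) [NeZero n]
    (f₁ f₂ f₃ f₄ : Polynomial F)
    (hmonic : f₁.Monic ∧ f₂.Monic ∧ f₃.Monic ∧ f₄.Monic)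
    (hdvd₁ : ∃ h, (X ^ n - Polynomial.C α₁ : Polynomial F) = skewMul (· ^ p ^ t) h f₁)
    (hdvd₂ : ∃ h, (X ^ n - Polynomial.C (α₁ + α₂) : Polynomial F) = skewMul (· ^ p ^ t) h f₂)
    (hdvd₃ : ∃ h, (X ^ n - Polynomial.C (α₁ + α₃) : Polynomial F) = skewMul (· ^ p ^ t) h f₃)
    (hdvd₄ : ∃ h, (X ^ n - Polynomial.C (α₁ + α₂ + α₃ + α₄) : Polynomial F)
      = skewMul (· ^ p ^ t) h f₄) :
    let ι := algebraMap F R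
    let α : R := stdForm F R u v (α₁, α₂, α₃, α₄)
    let fmix : Polynomial R :=
      Polynomial.C (1 - u - v + u * v) * f₁.map ι + Polynomial.C (u - u * v) * f₂.map ι
        + Polynomial.C (v - u * v) * f₃.map ι + Polynomial.C (u * v) * f₄.map ι
    -- fmix is a right divisor of xⁿ - α in R[x;θ]
    (∃ h : Polynomial R, (X ^ n - Polynomial.C α : Polynomial R) = skewMul θ h fmix) ∧
    -- and the skew α-constacyclic code e₁⟨f₁⟩ ⊕ e₂⟨f₂⟩ ⊕ e₃⟨f₃⟩ ⊕ e₄⟨f₄⟩ is generated by fmix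
    combSet F R u v (skewGenC (· ^ p ^ t) n α₁ f₁) (skewGenC (· ^ p ^ t) n (α₁ + α₂) f₂)
        (skewGenC (· ^ p ^ t) n (α₁ + α₃) f₃) (skewGenC (· ^ p ^ t) n (α₁ + α₂ + α₃ + α₄) f₄)
      = skewGenC θ n α fmix := by
  intro ι α fmix
  have hq0 : p ^ t ≠ 0 := pow_ne_zero t hp.pos.ne'
  have σ0 : (0 : F) ^ p ^ t = 0 := zero_pow hq0
  have hchar : CharP F p := by
    have h1 : (ringChar F).Prime := CharP.char_is_prime F (ringChar F)
    obtain ⟨k, hk, hcard⟩ := FiniteField.card F (ringChar F)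
    have hdvd : ringChar F ∣ p ^ m := by
      rw [← hF, hcard]; exact dvd_pow_self _ (by positivity)
    have heq : ringChar F = p := (Nat.prime_dvd_prime_iff_eq h1 hp).mp (h1.dvd_of_dvd_pow hdvd)
    exact heq ▸ ringChar.charP F
  haveI := hchar
  haveI : Fact p.Prime := ⟨hp⟩
  have frobAdd : ∀ a b : F, (a + b) ^ p ^ t = a ^ p ^ t + b ^ p ^ t := fun a b =>
    add_pow_char_pow (x := a) (y := b) p t
  have frobNeg : ∀ a : F, (-a) ^ p ^ t = -(a ^ p ^ t) := fun a =>
    Odd.neg_pow ((hp.odd_of_ne_two hodd).pow) a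
  -- masking identities
  have hmask₁ : ∀ a b c d : F, (1 - u - v + u * v) * stdForm F R u v (a, b, c, d)
      = (1 - u - v + u * v) * ι a := by
    intro a b c d
    show (1 - u - v + u * v) * (ι a + u * ι b + v * ι c + u * v * ι d) = _
    linear_combination (ι b * (v - 1) + ι d * (v * v - v)) * hu + (ι c * (u - 1)) * hv
  have hmask₂ : ∀ a b c d : F, (u - u * v) * stdForm F R u v (a, b, c, d)
      = (u - u * v) * (ι a + ι b) := by
    intro a b c d
    show (u - u * v) * (ι a + u * ι b + v * ι c + u * v * ι d) = _
    linear_combination (ι b * (1 - v)) * hu + (ι c * (-u) + ι d * (-(u * u))) * hv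
  have hmask₃ : ∀ a b c d : F, (v - u * v) * stdForm F R u v (a, b, c, d)
      = (v - u * v) * (ι a + ι c) := by
    intro a b c d
    show (v - u * v) * (ι a + u * ι b + v * ι c + u * v * ι d) = _
    linear_combination (ι c * (1 - u)) * hv + (ι b * (-v) + ι d * (-(v * v))) * hu
  have hmask₄ : ∀ a b c d : F, (u * v) * stdForm F R u v (a, b, c, d)
      = (u * v) * (ι a + ι b + ι c + ι d) := by
    intro a b c d
    show (u * v) * (ι a + u * ι b + v * ι c + u * v * ι d) = _
    linear_combination (ι b * v + ι d * (v * v)) * hu + (ι c * u + ι d * u) * hv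
  -- θ basics
  have hθ0 : θ 0 = 0 := by
    have h := hθ 0 0 0 0
    simpa [stdForm, σ0] using h
  have hθι : ∀ a : F, θ (ι a) = ι (a ^ p ^ t) := by
    intro a
    have h1 : stdForm F R u v (a, 0, 0, 0) = ι a := by simp [stdForm]; rfl
    have h := hθ a 0 0 0
    rw [h1] at h
    rw [h]
    simp [stdForm, σ0]; rfl
  have hθadd : ∀ x y : R, θ (x + y) = θ x + θ y := by
    intro x y
    obtain ⟨⟨a, b, c, d⟩, rfl⟩ := hbij.2 x
    obtain ⟨⟨a', b', c', d'⟩, rfl⟩ := hbij.2 y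
    have hsum : ∀ a b c d a' b' c' d' : F,
        stdForm F R u v (a, b, c, d) + stdForm F R u v (a', b', c', d')
        = stdForm F R u v (a + a', b + b', c + c', d + d') := by
      intros; simp only [stdForm, map_add]; ring
    rw [hsum, hθ, hθ, hθ, frobAdd, frobAdd, frobAdd, frobAdd, ← hsum]
  -- representations of eₖ * ι s as standard forms
  have hrep₁ : ∀ s : F, (1 - u - v + u * v) * ι s = stdForm F R u v (s, -s, -s, s) := by
    intro s; simp only [stdForm, map_neg]; ring
  have hrep₂ : ∀ s : F, (u - u * v) * ι s = stdForm F R u v (0, s, 0, -s) := by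
    intro s; simp only [stdForm, map_neg, map_zero]; ring
  have hrep₃ : ∀ s : F, (v - u * v) * ι s = stdForm F R u v (0, 0, s, -s) := by
    intro s; simp only [stdForm, map_neg, map_zero]; ring
  have hrep₄ : ∀ s : F, (u * v) * ι s = stdForm F R u v (0, 0, 0, s) := by
    intro s; simp only [stdForm, map_zero]; ring
  -- θ commutes with multiplication by the idempotents
  have hcomm₁ : ∀ x : R, θ ((1 - u - v + u * v) * x) = (1 - u - v + u * v) * θ x := by
    intro x
    obtain ⟨⟨a, b, c, d⟩, rfl⟩ := hbij.2 x
    calc θ ((1 - u - v + u * v) * stdForm F R u v (a, b, c, d))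
        = θ (stdForm F R u v (a, -a, -a, a)) := by rw [hmask₁, hrep₁]
      _ = stdForm F R u v (a ^ p ^ t, (-a) ^ p ^ t, (-a) ^ p ^ t, a ^ p ^ t) := hθ _ _ _ _
      _ = (1 - u - v + u * v) * ι (a ^ p ^ t) := by rw [frobNeg, ← hrep₁]
      _ = (1 - u - v + u * v) * stdForm F R u v (a ^ p ^ t, b ^ p ^ t, c ^ p ^ t, d ^ p ^ t) := by
          rw [hmask₁]
      _ = (1 - u - v + u * v) * θ (stdForm F R u v (a, b, c, d)) := by rw [hθ]
  have hcomm₂ : ∀ x : R, θ ((u - u * v) * x) = (u - u * v) * θ x := by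
    intro x
    obtain ⟨⟨a, b, c, d⟩, rfl⟩ := hbij.2 x
    calc θ ((u - u * v) * stdForm F R u v (a, b, c, d))
        = θ (stdForm F R u v (0, a + b, 0, -(a + b))) := by rw [hmask₂, ← map_add, hrep₂]
      _ = stdForm F R u v (0 ^ p ^ t, (a + b) ^ p ^ t, 0 ^ p ^ t, (-(a + b)) ^ p ^ t) :=
          hθ _ _ _ _
      _ = (u - u * v) * ι (a ^ p ^ t + b ^ p ^ t) := by
          rw [σ0, frobNeg, frobAdd, ← hrep₂]
      _ = (u - u * v) * stdForm F R u v (a ^ p ^ t, b ^ p ^ t, c ^ p ^ t, d ^ p ^ t) := by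
          rw [hmask₂, map_add]
      _ = (u - u * v) * θ (stdForm F R u v (a, b, c, d)) := by rw [hθ]
  have hcomm₃ : ∀ x : R, θ ((v - u * v) * x) = (v - u * v) * θ x := by
    intro x
    obtain ⟨⟨a, b, c, d⟩, rfl⟩ := hbij.2 x
    calc θ ((v - u * v) * stdForm F R u v (a, b, c, d))
        = θ (stdForm F R u v (0, 0, a + c, -(a + c))) := by rw [hmask₃, ← map_add, hrep₃]
      _ = stdForm F R u v (0 ^ p ^ t, 0 ^ p ^ t, (a + c) ^ p ^ t, (-(a + c)) ^ p ^ t) :=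
          hθ _ _ _ _
      _ = (v - u * v) * ι (a ^ p ^ t + c ^ p ^ t) := by
          rw [σ0, frobNeg, frobAdd, ← hrep₃]
      _ = (v - u * v) * stdForm F R u v (a ^ p ^ t, b ^ p ^ t, c ^ p ^ t, d ^ p ^ t) := by
          rw [hmask₃, map_add]
      _ = (v - u * v) * θ (stdForm F R u v (a, b, c, d)) := by rw [hθ]
  have hcomm₄ : ∀ x : R, θ ((u * v) * x) = (u * v) * θ x := by
    intro x
    obtain ⟨⟨a, b, c, d⟩, rfl⟩ := hbij.2 x
    calc θ ((u * v) * stdForm F R u v (a, b, c, d))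
        = θ (stdForm F R u v (0, 0, 0, a + b + c + d)) := by
          rw [hmask₄, ← map_add, ← map_add, ← map_add, hrep₄]
      _ = stdForm F R u v (0 ^ p ^ t, 0 ^ p ^ t, 0 ^ p ^ t, (a + b + c + d) ^ p ^ t) :=
          hθ _ _ _ _
      _ = (u * v) * ι (a ^ p ^ t + b ^ p ^ t + c ^ p ^ t + d ^ p ^ t) := by
          rw [σ0, frobAdd, frobAdd, frobAdd, ← hrep₄]
      _ = (u * v) * stdForm F R u v (a ^ p ^ t, b ^ p ^ t, c ^ p ^ t, d ^ p ^ t) := by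
          rw [hmask₄, map_add, map_add, map_add]
      _ = (u * v) * θ (stdForm F R u v (a, b, c, d)) := by rw [hθ]
  -- products of idempotents
  have m11 : (1 - u - v + u * v) * (1 - u - v + u * v) = (1 - u - v + u * v) := by
    have h := hmask₁ 1 (-1) (-1) 1
    rw [← hrep₁ 1] at h
    simpa using h
  have m12 : (1 - u - v + u * v) * (u - u * v) = 0 := by
    have h := hmask₁ 0 1 0 (-1)
    rw [← hrep₂ 1] at h
    simpa using h
  have m13 : (1 - u - v + u * v) * (v - u * v) = 0 := by
    have h := hmask₁ 0 0 1 (-1)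
    rw [← hrep₃ 1] at h
    simpa using h
  have m14 : (1 - u - v + u * v) * (u * v) = 0 := by
    have h := hmask₁ 0 0 0 1
    rw [← hrep₄ 1] at h
    simpa using h
  have m21 : (u - u * v) * (1 - u - v + u * v) = 0 := by
    have h := hmask₂ 1 (-1) (-1) 1
    rw [← hrep₁ 1] at h
    simpa using h
  have m22 : (u - u * v) * (u - u * v) = (u - u * v) := by
    have h := hmask₂ 0 1 0 (-1)
    rw [← hrep₂ 1] at h
    simpa using h
  have m23 : (u - u * v) * (v - u * v) = 0 := by
    have h := hmask₂ 0 0 1 (-1)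
    rw [← hrep₃ 1] at h
    simpa using h
  have m24 : (u - u * v) * (u * v) = 0 := by
    have h := hmask₂ 0 0 0 1
    rw [← hrep₄ 1] at h
    simpa using h
  have m31 : (v - u * v) * (1 - u - v + u * v) = 0 := by
    have h := hmask₃ 1 (-1) (-1) 1
    rw [← hrep₁ 1] at h
    simpa using h
  have m32 : (v - u * v) * (u - u * v) = 0 := by
    have h := hmask₃ 0 1 0 (-1)
    rw [← hrep₂ 1] at h
    simpa using h
  have m33 : (v - u * v) * (v - u * v) = (v - u * v) := by
    have h := hmask₃ 0 0 1 (-1)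
    rw [← hrep₃ 1] at h
    simpa using h
  have m34 : (v - u * v) * (u * v) = 0 := by
    have h := hmask₃ 0 0 0 1
    rw [← hrep₄ 1] at h
    simpa using h
  have m41 : (u * v) * (1 - u - v + u * v) = 0 := by
    have h := hmask₄ 1 (-1) (-1) 1
    rw [← hrep₁ 1] at h
    simpa using h
  have m42 : (u * v) * (u - u * v) = 0 := by
    have h := hmask₄ 0 1 0 (-1)
    rw [← hrep₂ 1] at h
    simpa using h
  have m43 : (u * v) * (v - u * v) = 0 := by
    have h := hmask₄ 0 0 1 (-1)
    rw [← hrep₃ 1] at h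
    simpa using h
  have m44 : (u * v) * (u * v) = (u * v) := by
    have h := hmask₄ 0 0 0 1
    rw [← hrep₄ 1] at h
    simpa using h
  -- α masking
  have hα₁ : (1 - u - v + u * v) * α = (1 - u - v + u * v) * ι α₁ := hmask₁ α₁ α₂ α₃ α₄
  have hα₂ : (u - u * v) * α = (u - u * v) * ι (α₁ + α₂) := by
    rw [map_add]; exact hmask₂ α₁ α₂ α₃ α₄
  have hα₃ : (v - u * v) * α = (v - u * v) * ι (α₁ + α₃) := by
    rw [map_add]; exact hmask₃ α₁ α₂ α₃ α₄
  have hα₄ : (u * v) * α = (u * v) * ι (α₁ + α₂ + α₃ + α₄) := by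
    rw [map_add, map_add, map_add]; exact hmask₄ α₁ α₂ α₃ α₄
  have hαdec : α = (1 - u - v + u * v) * ι α₁ + (u - u * v) * ι (α₁ + α₂)
      + (v - u * v) * ι (α₁ + α₃) + (u * v) * ι (α₁ + α₂ + α₃ + α₄) := by
    show stdForm F R u v (α₁, α₂, α₃, α₄) = _
    simp only [stdForm, map_add]
    ring
  -- the key computation
  have key : ∀ (e : R), (∀ x, θ (e * x) = e * θ x) → ∀ h : Polynomial F,
      skewMul θ (C e * h.map ι) fmix
        = C (e * (1 - u - v + u * v)) * (skewMul (· ^ p ^ t) h f₁).map ι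
        + C (e * (u - u * v)) * (skewMul (· ^ p ^ t) h f₂).map ι
        + C (e * (v - u * v)) * (skewMul (· ^ p ^ t) h f₃).map ι
        + C (e * (u * v)) * (skewMul (· ^ p ^ t) h f₄).map ι := by
    intro e hcomm h
    rw [skewMul_C_mul_left hθ0]
    show C e * skewMul θ (h.map ι)
        (C (1 - u - v + u * v) * f₁.map ι + C (u - u * v) * f₂.map ι
          + C (v - u * v) * f₃.map ι + C (u * v) * f₄.map ι) = _
    rw [skewMul_add_right hθ0 hθadd, skewMul_add_right hθ0 hθadd,
      skewMul_add_right hθ0 hθadd,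
      skewMul_C_mul_right hθ0 _ hcomm₁, skewMul_C_mul_right hθ0 _ hcomm₂,
      skewMul_C_mul_right hθ0 _ hcomm₃, skewMul_C_mul_right hθ0 _ hcomm₄,
      skewMul_map ι (· ^ p ^ t) hθι σ0 h f₁, skewMul_map ι (· ^ p ^ t) hθι σ0 h f₂,
      skewMul_map ι (· ^ p ^ t) hθι σ0 h f₃, skewMul_map ι (· ^ p ^ t) hθι σ0 h f₄]
    simp only [mul_add, ← mul_assoc, ← C_mul]
  have key₁ : ∀ h : Polynomial F, skewMul θ (C (1 - u - v + u * v) * h.map ι) fmix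
      = C (1 - u - v + u * v) * (skewMul (· ^ p ^ t) h f₁).map ι := by
    intro h
    rw [key _ hcomm₁ h, m11, m12, m13, m14]
    simp
  have key₂ : ∀ h : Polynomial F, skewMul θ (C (u - u * v) * h.map ι) fmix
      = C (u - u * v) * (skewMul (· ^ p ^ t) h f₂).map ι := by
    intro h
    rw [key _ hcomm₂ h, m21, m22, m23, m24]
    simp
  have key₃ : ∀ h : Polynomial F, skewMul θ (C (v - u * v) * h.map ι) fmix
      = C (v - u * v) * (skewMul (· ^ p ^ t) h f₃).map ι := by
    intro h
    rw [key _ hcomm₃ h, m31, m32, m33, m34]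
    simp
  have key₄ : ∀ h : Polynomial F, skewMul θ (C (u * v) * h.map ι) fmix
      = C (u * v) * (skewMul (· ^ p ^ t) h f₄).map ι := by
    intro h
    rw [key _ hcomm₄ h, m41, m42, m43, m44]
    simp
  have main : ∀ g₁ g₂ g₃ g₄ : Polynomial F,
      redModC n α (skewMul θ (C (1 - u - v + u * v) * g₁.map ι + C (u - u * v) * g₂.map ι
          + C (v - u * v) * g₃.map ι + C (u * v) * g₄.map ι) fmix)
      = fun i => (1 - u - v + u * v) * ι (redModC n α₁ (skewMul (· ^ p ^ t) g₁ f₁) i)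
        + (u - u * v) * ι (redModC n (α₁ + α₂) (skewMul (· ^ p ^ t) g₂ f₂) i)
        + (v - u * v) * ι (redModC n (α₁ + α₃) (skewMul (· ^ p ^ t) g₃ f₃) i)
        + (u * v) * ι (redModC n (α₁ + α₂ + α₃ + α₄) (skewMul (· ^ p ^ t) g₄ f₄) i) := by
    intro g₁ g₂ g₃ g₄
    funext i
    rw [skewMul_add_left hθ0, skewMul_add_left hθ0, skewMul_add_left hθ0,
      key₁ g₁, key₂ g₂, key₃ g₃, key₄ g₄,
      redModC_add, redModC_add, redModC_add,
      redModC_C_mul_map ι _ α α₁ hα₁, redModC_C_mul_map ι _ α (α₁ + α₂) hα₂,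
      redModC_C_mul_map ι _ α (α₁ + α₃) hα₃,
      redModC_C_mul_map ι _ α (α₁ + α₂ + α₃ + α₄) hα₄]
  obtain ⟨hh₁, hd₁⟩ := hdvd₁
  obtain ⟨hh₂, hd₂⟩ := hdvd₂
  obtain ⟨hh₃, hd₃⟩ := hdvd₃
  obtain ⟨hh₄, hd₄⟩ := hdvd₄
  constructor
  · refine ⟨C (1 - u - v + u * v) * hh₁.map ι + C (u - u * v) * hh₂.map ι
      + C (v - u * v) * hh₃.map ι + C (u * v) * hh₄.map ι, ?_⟩
    rw [skewMul_add_left hθ0, skewMul_add_left hθ0, skewMul_add_left hθ0,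
      key₁, key₂, key₃, key₄, ← hd₁, ← hd₂, ← hd₃, ← hd₄]
    simp only [Polynomial.map_sub, Polynomial.map_pow, Polynomial.map_X, Polynomial.map_C]
    rw [hαdec]
    simp only [map_add, map_mul, map_sub, map_one]
    ring
  · ext x
    simp only [combSet, skewGenC, Set.mem_setOf_eq]
    constructor
    · rintro ⟨a, ⟨g₁, rfl⟩, b, ⟨g₂, rfl⟩, c, ⟨g₃, rfl⟩, d, ⟨g₄, rfl⟩, rfl⟩
      exact ⟨_, (main g₁ g₂ g₃ g₄).symm⟩
    · rintro ⟨H, rfl⟩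
      set gE := Equiv.ofBijective _ hbij with hgE
      have hsp : ∀ r : R, stdForm F R u v (gE.symm r) = r := fun r => gE.apply_symm_apply r
      have hπ0 : gE.symm (0 : R) = ((0 : F), (0 : F), (0 : F), (0 : F)) := by
        have h0 : stdForm F R u v (0, 0, 0, 0) = 0 := by simp [stdForm]
        rw [← h0]
        exact gE.symm_apply_apply _
      have hdec : ∀ w : F × F × F × F, stdForm F R u v w
          = (1 - u - v + u * v) * ι w.1 + (u - u * v) * ι (w.1 + w.2.1)
            + (v - u * v) * ι (w.1 + w.2.2.1)
            + (u * v) * ι (w.1 + w.2.1 + w.2.2.1 + w.2.2.2) := by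
        intro w; simp only [stdForm, map_add]; ring
      set P₁ : Polynomial F := ∑ i ∈ H.support, C ((gE.symm (H.coeff i)).1) * X ^ i with hP₁
      set P₂ : Polynomial F := ∑ i ∈ H.support,
        C ((gE.symm (H.coeff i)).1 + (gE.symm (H.coeff i)).2.1) * X ^ i with hP₂
      set P₃ : Polynomial F := ∑ i ∈ H.support,
        C ((gE.symm (H.coeff i)).1 + (gE.symm (H.coeff i)).2.2.1) * X ^ i with hP₃
      set P₄ : Polynomial F := ∑ i ∈ H.support,
        C ((gE.symm (H.coeff i)).1 + (gE.symm (H.coeff i)).2.1 + (gE.symm (H.coeff i)).2.2.1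
          + (gE.symm (H.coeff i)).2.2.2) * X ^ i with hP₄
      have hcoeff : ∀ (q : F × F × F × F → F), q 0 = 0 →
          ∀ i, (∑ j ∈ H.support, C (q (gE.symm (H.coeff j))) * X ^ j).coeff i
            = q (gE.symm (H.coeff i)) := by
        intro q hq0 i
        rw [finset_sum_coeff]
        simp only [coeff_C_mul, coeff_X_pow, mul_ite, mul_one, mul_zero]
        rw [Finset.sum_ite_eq]
        by_cases hi : i ∈ H.support
        · simp [hi]
        · simp [hi, Polynomial.notMem_support_iff.mp hi, hπ0, hq0]; exact hq0.symm
      have hc₁ : ∀ i, P₁.coeff i = (gE.symm (H.coeff i)).1 :=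
        hcoeff (fun w => w.1) rfl
      have hc₂ : ∀ i, P₂.coeff i = (gE.symm (H.coeff i)).1 + (gE.symm (H.coeff i)).2.1 := by
        have := hcoeff (fun w => w.1 + w.2.1) (by simp)
        exact this
      have hc₃ : ∀ i, P₃.coeff i = (gE.symm (H.coeff i)).1 + (gE.symm (H.coeff i)).2.2.1 := by
        have := hcoeff (fun w => w.1 + w.2.2.1) (by simp)
        exact this
      have hc₄ : ∀ i, P₄.coeff i = (gE.symm (H.coeff i)).1 + (gE.symm (H.coeff i)).2.1
          + (gE.symm (H.coeff i)).2.2.1 + (gE.symm (H.coeff i)).2.2.2 := by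
        have := hcoeff (fun w => w.1 + w.2.1 + w.2.2.1 + w.2.2.2) (by simp)
        exact this
      have hHdec : H = C (1 - u - v + u * v) * P₁.map ι + C (u - u * v) * P₂.map ι
          + C (v - u * v) * P₃.map ι + C (u * v) * P₄.map ι := by
        ext i
        simp only [coeff_add, coeff_C_mul, coeff_map, hc₁, hc₂, hc₃, hc₄]
        conv_lhs => rw [← hsp (H.coeff i)]
        rw [hdec]
      refine ⟨redModC n α₁ (skewMul (· ^ p ^ t) P₁ f₁), ⟨P₁, rfl⟩,
              redModC n (α₁ + α₂) (skewMul (· ^ p ^ t) P₂ f₂), ⟨P₂, rfl⟩,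
              redModC n (α₁ + α₃) (skewMul (· ^ p ^ t) P₃ f₃), ⟨P₃, rfl⟩,
              redModC n (α₁ + α₂ + α₃ + α₄) (skewMul (· ^ p ^ t) P₄ f₄), ⟨P₄, rfl⟩, ?_⟩
      conv_lhs => rw [hHdec]
      exact main P₁ P₂ P₃ P₄
end
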